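/- Let G be an r-regular finite simple graph with n vertices and m edges. Then NK(G^{+--}) = m^n · (m+n-2r-1)^m. -/

import Mathlib

open Finset

variable {V : Type*}

/-- The Narumi–Katayama index: the product of the degrees of all vertices. -/
def NK {W : Type*} [Fintype W] (H : SimpleGraph W) [DecidableRel H.Adj] : ℕ :=
  ∏ v, H.degree v

/-- The first Zagreb index: the sum of the squares of the degrees. -/
def M1 [Fintype V] (G : SimpleGraph V) [DecidableRel G.Adj] : ℕ :=
  ∑ v, (G.degree v) ^ 2

/-- The multiplicative sum Zagreb index: the product over the edges of `G` of the
sum of the degrees of the two endpoints. -/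
def Pi1Star [Fintype V] [DecidableEq V] (G : SimpleGraph V) [DecidableRel G.Adj] : ℕ :=
  ∏ e ∈ G.edgeFinset,
    Sym2.lift ⟨fun u v => G.degree u + G.degree v, fun u v => by simp [Nat.add_comm]⟩ e

/-- A generic transformation graph on the vertex set `V(G) ∪ E(G)`, built from a
symmetric irreflexive relation `Rvv` between vertices, a symmetric irreflexive relation
`Ree` between edges, and an incidence relation `Rve` between vertices and edges. -/
def transGraph (G : SimpleGraph V) (Rvv : V → V → Prop) (Ree : Sym2 V → Sym2 V → Prop)
    (Rve : V → Sym2 V → Prop)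
    (hvv : Symmetric Rvv) (hvv' : Irreflexive Rvv)
    (hee : Symmetric Ree) (hee' : Irreflexive Ree) :
    SimpleGraph (V ⊕ G.edgeSet) where
  Adj a b :=
    match a, b with
    | Sum.inl u, Sum.inl v => Rvv u v
    | Sum.inr e, Sum.inr f => Ree e.1 f.1
    | Sum.inl u, Sum.inr e => Rve u e.1
    | Sum.inr e, Sum.inl u => Rve u e.1
  symm := by
    refine ⟨?_⟩
    rintro (u | e) (v | f) h
    · exact hvv h
    · exact h
    · exact h
    · exact hee h
  loopless := by
    refine ⟨?_⟩
    rintro (u | e) h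
    · exact hvv' u h
    · exact hee' e.1 h

instance transGraph.instDecidableAdj (G : SimpleGraph V) (Rvv : V → V → Prop)
    (Ree : Sym2 V → Sym2 V → Prop) (Rve : V → Sym2 V → Prop)
    (h1 : Symmetric Rvv) (h2 : Irreflexive Rvv) (h3 : Symmetric Ree) (h4 : Irreflexive Ree)
    [DecidableRel Rvv] [DecidableRel Ree] [∀ u e, Decidable (Rve u e)] :
    DecidableRel (transGraph G Rvv Ree Rve h1 h2 h3 h4).Adj := fun a b =>
  match a, b with
  | Sum.inl u, Sum.inl v => inferInstanceAs (Decidable (Rvv u v))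
  | Sum.inr e, Sum.inr f => inferInstanceAs (Decidable (Ree e.1 f.1))
  | Sum.inl u, Sum.inr e => inferInstanceAs (Decidable (Rve u e.1))
  | Sum.inr e, Sum.inl u => inferInstanceAs (Decidable (Rve u e.1))

/-- Two edges (as elements of `Sym2 V`) are adjacent: distinct and sharing an endpoint. -/
abbrev shareRel : Sym2 V → Sym2 V → Prop := fun e f => e ≠ f ∧ ∃ w, w ∈ e ∧ w ∈ f

lemma shareRel_symm : Symmetric (shareRel (V := V)) :=
  fun _ _ h => ⟨h.1.symm, h.2.imp fun _ hw => ⟨hw.2, hw.1⟩⟩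

lemma shareRel_irrefl : Irreflexive (shareRel (V := V)) := fun _ h => h.1 rfl

/-- Two edges are "non-adjacent": distinct and sharing no endpoint. -/
abbrev coshareRel : Sym2 V → Sym2 V → Prop := fun e f => e ≠ f ∧ ∀ w, w ∈ e → w ∉ f

lemma coshareRel_symm : Symmetric (coshareRel (V := V)) :=
  fun _ _ h => ⟨h.1.symm, fun w hf he => h.2 w he hf⟩

lemma coshareRel_irrefl : Irreflexive (coshareRel (V := V)) := fun _ h => h.1 rfl

/-- Non-adjacency of distinct vertices. -/
abbrev coAdj (G : SimpleGraph V) : V → V → Prop := fun u v => u ≠ v ∧ ¬ G.Adj u v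

lemma coAdj_symm (G : SimpleGraph V) : Symmetric (coAdj G) :=
  fun _ _ h => ⟨h.1.symm, fun ha => h.2 ha.symm⟩

lemma coAdj_irrefl (G : SimpleGraph V) : Irreflexive (coAdj G) := fun _ h => h.1 rfl

variable [Fintype V] [DecidableEq V]

/-- The total transformation graph `G^{+--}`. -/
abbrev Gpmm (G : SimpleGraph V) [DecidableRel G.Adj] : SimpleGraph (V ⊕ G.edgeSet) :=
  transGraph G G.Adj coshareRel (fun u e => u ∉ e)
    (show Symmetric G.Adj from fun _ _ h => G.adj_symm h)
    (show Irreflexive G.Adj from fun _ => G.irrefl) coshareRel_symm coshareRel_irrefl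


lemma deg_inl_aux (G : SimpleGraph V) [DecidableRel G.Adj] (u : V) :
    (Gpmm G).degree (Sum.inl u) = G.edgeFinset.card := by
  classical
  have hle : G.degree u ≤ G.edgeFinset.card := by
    rw [← G.card_incidenceFinset_eq_degree]
    exact Finset.card_le_card (by rw [G.incidenceFinset_eq_filter]; exact Finset.filter_subset _ _)
  rw [← SimpleGraph.card_neighborSet_eq_degree]
  have e1 : ((Gpmm G).neighborSet (Sum.inl u)) ≃
      {v // G.Adj u v} ⊕ {e : G.edgeSet // u ∉ e.1} :=
    Equiv.subtypeSum (p := fun c => (Gpmm G).Adj (Sum.inl u) c)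
  rw [Fintype.card_congr e1, Fintype.card_sum]
  have h1 : Fintype.card {v // G.Adj u v} = G.degree u :=
    (Fintype.card_congr (Equiv.refl _)).trans (G.card_neighborSet_eq_degree u)
  have h2 : Fintype.card {e : G.edgeSet // u ∈ e.1} = G.degree u := by
    have e2 : {e : G.edgeSet // u ∈ e.1} ≃ G.incidenceSet u :=
      { toFun := fun f => ⟨f.1.1, f.1.2, f.2⟩
        invFun := fun f => ⟨⟨f.1, f.2.1⟩, f.2.2⟩
        left_inv := fun f => rfl
        right_inv := fun f => rfl }
    rw [Fintype.card_congr e2, SimpleGraph.card_incidenceSet_eq_degree]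
  have h3 : Fintype.card {e : G.edgeSet // u ∉ e.1} =
      G.edgeFinset.card - G.degree u := by
    rw [Fintype.card_subtype_compl, h2, ← SimpleGraph.edgeFinset_card]
  rw [h1, h3]
  omega

lemma deg_inr_aux (G : SimpleGraph V) [DecidableRel G.Adj] {r : ℕ}
    (hreg : G.IsRegularOfDegree r) (e : G.edgeSet) :
    (Gpmm G).degree (Sum.inr e) =
      G.edgeFinset.card + Fintype.card V - 2 * r - 1 := by
  classical
  obtain ⟨ep, hep⟩ := e
  induction ep using Sym2.ind with
  | _ a b =>
  have hab : G.Adj a b := hep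
  rw [← SimpleGraph.card_neighborSet_eq_degree]
  have e1 : ((Gpmm G).neighborSet (Sum.inr ⟨s(a, b), hep⟩)) ≃
      {v : V // v ∉ (s(a, b) : Sym2 V)} ⊕ {f : G.edgeSet // coshareRel s(a, b) f.1} :=
    Equiv.subtypeSum (p := fun c => (Gpmm G).Adj (Sum.inr ⟨s(a, b), hep⟩) c)
  rw [Fintype.card_congr e1, Fintype.card_sum]
  have hV : Fintype.card {v : V // v ∈ (s(a, b) : Sym2 V)} = 2 := by
    rw [Fintype.card_subtype]
    have hfil : Finset.univ.filter (fun v => v ∈ (s(a, b) : Sym2 V)) = {a, b} := by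
      ext v; simp [Sym2.mem_iff]
    rw [hfil, Finset.card_insert_of_notMem (by simp [hab.ne]), Finset.card_singleton]
  have hn : 2 ≤ Fintype.card V := by
    rw [← hV]; exact Fintype.card_subtype_le _
  have h1 : Fintype.card {v : V // v ∉ (s(a, b) : Sym2 V)} = Fintype.card V - 2 := by
    rw [Fintype.card_subtype_compl, hV]
  set U : Finset (Sym2 V) := G.incidenceFinset a ∪ G.incidenceFinset b with hU
  have hinter : G.incidenceFinset a ∩ G.incidenceFinset b = {s(a, b)} := by
    ext f
    simp only [Finset.mem_inter, SimpleGraph.mem_incidenceFinset, Finset.mem_singleton]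
    rw [← Set.mem_inter_iff, G.incidenceSet_inter_incidenceSet_of_adj hab,
      Set.mem_singleton_iff]
  have hUcard : U.card + 1 = 2 * r := by
    have hc := Finset.card_union_add_card_inter (G.incidenceFinset a) (G.incidenceFinset b)
    rw [hinter, Finset.card_singleton, G.card_incidenceFinset_eq_degree,
      G.card_incidenceFinset_eq_degree, hreg a, hreg b, ← hU] at hc
    omega
  have hUsub : U ⊆ G.edgeFinset := by
    apply Finset.union_subset <;>
      · rw [SimpleGraph.incidenceFinset_eq_filter]; exact Finset.filter_subset _ _
  have hUle : U.card ≤ G.edgeFinset.card := Finset.card_le_card hUsub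
  have hiff : ∀ f : G.edgeSet, coshareRel s(a, b) f.1 ↔ ¬ f.1 ∈ U := by
    intro f
    have hmem : f.1 ∈ U ↔ a ∈ f.1 ∨ b ∈ f.1 := by
      simp only [hU, Finset.mem_union, SimpleGraph.mem_incidenceFinset,
        SimpleGraph.incidenceSet]
      constructor
      · rintro (⟨_, h⟩ | ⟨_, h⟩)
        · exact Or.inl h
        · exact Or.inr h
      · rintro (h | h)
        · exact Or.inl ⟨f.2, h⟩
        · exact Or.inr ⟨f.2, h⟩
    rw [hmem]
    constructor
    · rintro ⟨hne, h⟩ (ha | hb)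
      · exact h a (Sym2.mem_mk_left a b) ha
      · exact h b (Sym2.mem_mk_right a b) hb
    · intro h
      refine ⟨fun heq => h (Or.inl (heq ▸ Sym2.mem_mk_left a b)), fun w hw hwf => ?_⟩
      rcases Sym2.mem_iff.1 hw with rfl | rfl
      · exact h (Or.inl hwf)
      · exact h (Or.inr hwf)
  have hUmem : Fintype.card {f : G.edgeSet // f.1 ∈ U} = U.card := by
    have e3 : {f : G.edgeSet // f.1 ∈ U} ≃ {x // x ∈ U} :=
      { toFun := fun f => ⟨f.1.1, f.2⟩
        invFun := fun x => ⟨⟨x.1, (SimpleGraph.mem_edgeFinset).1 (hUsub x.2)⟩, x.2⟩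
        left_inv := fun f => rfl
        right_inv := fun x => rfl }
    rw [Fintype.card_congr e3, Fintype.card_coe]
  have h2 : Fintype.card {f : G.edgeSet // coshareRel s(a, b) f.1} =
      G.edgeFinset.card - U.card := by
    rw [Fintype.card_congr (Equiv.subtypeEquivRight hiff), Fintype.card_subtype_compl,
      hUmem, ← SimpleGraph.edgeFinset_card]
  rw [h1, h2]
  omega

theorem stmt_15 (G : SimpleGraph V) [DecidableRel G.Adj]
    (r : ℕ)
    (hreg : G.IsRegularOfDegree r) :
    NK (Gpmm G) = G.edgeFinset.card ^ Fintype.card V * (G.edgeFinset.card + Fintype.card V - 2 * r - 1) ^ G.edgeFinset.card := by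
  classical
  unfold NK
  rw [Fintype.prod_sum_type]
  simp only [deg_inl_aux, deg_inr_aux G hreg]
  rw [Finset.prod_const, Finset.prod_const, Finset.card_univ, Finset.card_univ,
    ← SimpleGraph.edgeFinset_card]
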